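/- arXiv:2404.12057 — 2 statements merged into one kernel-verified Lean document; each statement's English description precedes it below -/
import Mathlib

section
/- A nonempty subset A ⊆ X̂ is gated with respect to the majority-vote median μ if and only if A is P-convex. -/
open Set

namespace WallDuality

variable {S : Type*}

/-- A wall on `S`, recorded as the unordered pair of its two complementary halfspaces. -/
def IsWall (h : Set (Set S)) : Prop := ∃ A : Set S, h = {A, Aᶜ}

/-- A set with walls: every element of `P` is a wall on `S`. -/
def IsWallSystem (P : Set (Set (Set S))) : Prop := ∀ h ∈ P, IsWall h

variable (P : Set (Set (Set S)))

/-- An ultrafilter on `P`: a consistent choice of a halfspace of each wall of `P`. -/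
def IsUltra (x : ↥P → Set S) : Prop :=
  (∀ w : ↥P, x w ∈ w.1) ∧
    ∀ (w₁ w₂ : ↥P) (A B : Set S), A ∈ w₁.1 → B ∈ w₂.1 → A ⊆ B → x w₁ = A → x w₂ = B

/-- The set `X̂` of all ultrafilters on `P`. -/
def hatX : Set (↥P → Set S) := {x | IsUltra P x}

/-- The principal ultrafilter of a point `s`: each wall is oriented towards `s`. -/
def principalUF (s : S) : ↥P → Set S := fun w => ⋃₀ {A | A ∈ w.1 ∧ s ∈ A}

/-- The pseudodistance associated with a collection `C` of subsets of `P`: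
the supremum of the cardinalities of members of `C` all of whose walls separate
the two orientations. -/
noncomputable def wallDist (C : Set (Set ↥P)) (x y : ↥P → Set S) : ℕ∞ :=
  ⨆ c ∈ {c | c ∈ C ∧ ∀ w ∈ c, x w ≠ y w}, c.encard

/-- A dualisable system on `(S, P)`. -/
structure IsDualisable (C : Set (Set ↥P)) : Prop where
  singleton_mem : ∀ w : ↥P, ({w} : Set ↥P) ∈ C
  subset_mem : ∀ c ∈ C, ∀ c' ⊆ c, c' ∈ C
  bounded : ∀ s t : S, ∃ M : ℕ, ∀ c ∈ C,
    (∀ w ∈ c, principalUF P s w ≠ principalUF P t w) → c.encard ≤ (M : ℕ∞)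

/-- The dual space `X_C`: ultrafilters at finite distance from all principal ones. -/
def dualSpace (C : Set (Set ↥P)) : Set (↥P → Set S) :=
  {x | IsUltra P x ∧ ∀ s : S, wallDist P C x (principalUF P s) ≠ ⊤}

/-- The majority-vote median of three orientations. -/
def medianUF (x y z : ↥P → Set S) : ↥P → Set S :=
  fun w => x w ∩ y w ∪ x w ∩ z w ∪ y w ∩ z w

/-- A `P`-convex subset of `X̂`: an intersection of halfspaces. -/
def IsPConvex (C' : Set (↥P → Set S)) : Prop :=
  ∃ (Q : Set ↥P) (σ : ↥P → Set S), (∀ w ∈ Q, σ w ∈ w.1) ∧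
    C' = {v | IsUltra P v ∧ ∀ w ∈ Q, v w = σ w}

open scoped Classical in
/-- The gate of `z` to a set `C'` of orientations: reverse the orientation of exactly
those walls that separate `z` from `C'`. -/
noncomputable def gateUF (C' : Set (↥P → Set S)) (z : ↥P → Set S) : ↥P → Set S :=
  fun w => if ∃ v ∈ C', v w = z w then z w else (z w)ᶜ

/-- `A` is gated in `Y` (with respect to the majority-vote median). -/
def IsGatedIn (Y A : Set (↥P → Set S)) : Prop :=
  ∀ x ∈ Y, ∃! g, g ∈ A ∧ ∀ a ∈ A, medianUF P a g x = g

/-- `σ` is a nested choice of halfspaces witnessing that `c` is a chain. -/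
def IsChainOrder (σ : ↥P → Set S) (c : Set ↥P) : Prop :=
  (∀ w ∈ c, σ w ∈ w.1) ∧ ∀ w₁ ∈ c, ∀ w₂ ∈ c, σ w₁ ⊆ σ w₂ ∨ σ w₂ ⊆ σ w₁

/-- A chain of walls. -/
def IsWallChain (c : Set ↥P) : Prop := ∃ σ, IsChainOrder P σ c

/-- A system of chains: a dualisable system all of whose members are chains. -/
def IsChainSystem (C : Set (Set ↥P)) : Prop :=
  IsDualisable P C ∧ ∀ c ∈ C, IsWallChain P c

/-- `C` is `m`-gluable: two members of `C`, one entirely preceding the other and with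
union a chain, can be glued after removing at most `m` consecutive walls taken from
the last `m` walls of the first and the first `m` walls of the second. -/
def IsGluable (C : Set (Set ↥P)) (m : ℕ) : Prop :=
  ∀ c₁ ∈ C, ∀ c₂ ∈ C, ∀ σ : ↥P → Set S,
    IsChainOrder P σ (c₁ ∪ c₂) → Disjoint c₁ c₂ →
    (∀ w₁ ∈ c₁, ∀ w₂ ∈ c₂, σ w₁ ⊆ σ w₂) →
    ∃ b ⊆ c₁ ∪ c₂,
      b.encard ≤ (m : ℕ∞) ∧
      (∀ w ∈ b ∩ c₁, {w' | w' ∈ c₁ ∧ σ w ⊂ σ w'}.encard < (m : ℕ∞)) ∧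
      (∀ w ∈ b ∩ c₂, {w' | w' ∈ c₂ ∧ σ w' ⊂ σ w}.encard < (m : ℕ∞)) ∧
      (∀ w₁ ∈ b, ∀ w₂ ∈ b, ∀ w ∈ c₁ ∪ c₂, σ w₁ ⊆ σ w → σ w ⊆ σ w₂ → w ∈ b) ∧
      (c₁ ∪ c₂) \ b ∈ C

/-- The ball of radius `r` about `x` in `X_C`. -/
def ballX (C : Set (Set ↥P)) (x : ↥P → Set S) (r : ℕ∞) : Set (↥P → Set S) :=
  {z | z ∈ dualSpace P C ∧ wallDist P C x z ≤ r}

/-- The normal wall path: the gate of `y` to the ball of radius `r` about `x`. -/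
noncomputable def nwp (C : Set (Set ↥P)) (x y : ↥P → Set S) (r : ℕ) : ↥P → Set S :=
  gateUF P (ballX P C x (r : ℕ∞)) y

/-- Two walls cross: all four quarterspaces are nonempty. -/
def Crosses (w₁ w₂ : ↥P) : Prop := ∀ A ∈ w₁.1, ∀ B ∈ w₂.1, (A ∩ B).Nonempty

/-- `C` is `L`-separated. -/
def IsSeparated (C : Set (Set ↥P)) (L : ℕ) : Prop :=
  ∀ w₁ w₂ : ↥P, w₁ ≠ w₂ → ({w₁, w₂} : Set ↥P) ∈ C →
    ∀ c ∈ C, (∀ w ∈ c, Crosses P w w₁ ∧ Crosses P w w₂) → c.encard ≤ (L : ℕ∞)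

end WallDuality

namespace WallDuality

/-- Two distinct members of a wall are complementary. -/
lemma wall_eq_compl {S : Type*} {h : Set (Set S)} (hw : IsWall h)
    {u v : Set S} (hu : u ∈ h) (hv : v ∈ h) (hne : u ≠ v) : u = vᶜ := by
  obtain ⟨C, rfl⟩ := hw
  simp only [Set.mem_insert_iff, Set.mem_singleton_iff] at hu hv
  rcases hu with rfl | rfl <;> rcases hv with rfl | rfl <;>
    first
      | exact absurd rfl hne
      | simp [compl_compl]

/-- Complement of a member of a wall belongs to the wall. -/
lemma compl_mem_wall {S : Type*} {h : Set (Set S)} (hw : IsWall h)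
    {u : Set S} (hu : u ∈ h) : uᶜ ∈ h := by
  obtain ⟨C, rfl⟩ := hw
  simp only [Set.mem_insert_iff, Set.mem_singleton_iff] at hu ⊢
  rcases hu with rfl | rfl <;> simp [compl_compl]

lemma maj_eq {α : Type*} {u v z : Set α} (h : v = z ∨ u = v) :
    u ∩ v ∪ u ∩ z ∪ v ∩ z = v := by
  rcases h with rfl | rfl <;> (ext p; by_cases hp : p ∈ u <;> simp [hp])

lemma compl_maj₁ {α : Type*} (u : Set α) :
    uᶜ ∩ u ∪ uᶜ ∩ uᶜ ∪ u ∩ uᶜ = uᶜ := by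
  ext p; by_cases hp : p ∈ u <;> simp [hp]

lemma compl_maj₂ {α : Type*} (u : Set α) :
    u ∩ uᶜ ∪ u ∩ u ∪ uᶜ ∩ u = u := by
  ext p; by_cases hp : p ∈ u <;> simp [hp]

/-- A nonempty subset of `X̂` is gated with respect to the majority-vote median
if and only if it is `P`-convex. -/
theorem gated_iff_PConvex
    {S : Type*} (P : Set (Set (Set S))) (hP : IsWallSystem P)
    (A : Set (↥P → Set S)) (hA : A.Nonempty) (hA' : A ⊆ hatX P) :
    IsGatedIn P (hatX P) A ↔ IsPConvex P A := by
  constructor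
  · -- gated → convex
    intro hgated
    obtain ⟨a₀, ha₀⟩ := hA
    refine ⟨{w | ∀ v₁ ∈ A, ∀ v₂ ∈ A, v₁ w = v₂ w}, fun w => a₀ w,
      fun w _ => (hA' ha₀).1 w, ?_⟩
    ext x
    simp only [Set.mem_setOf_eq]
    constructor
    · intro hxA
      exact ⟨hA' hxA, fun w hw => hw x hxA a₀ ha₀⟩
    · rintro ⟨hxu, hxQ⟩
      obtain ⟨g, ⟨hgA, hgmed⟩, -⟩ := hgated x hxu
      have hgx : ∀ w, g w = x w := by
        intro w
        by_contra hne
        have hall : ∀ a ∈ A, a w = g w := by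
          intro a ha
          by_contra hane
          have h1 : a w = (g w)ᶜ :=
            wall_eq_compl (hP _ w.2) ((hA' ha).1 w) ((hA' hgA).1 w) hane
          have h2 : x w = (g w)ᶜ :=
            wall_eq_compl (hP _ w.2) (hxu.1 w) ((hA' hgA).1 w) (fun h => hne h.symm)
          have e := congrFun (hgmed a ha) w
          simp only [medianUF] at e
          rw [h1, h2] at e
          have hcc : (g w)ᶜ = g w := (compl_maj₁ (g w)).symm.trans e
          exact hne (h2.trans hcc).symm
        have hwQ : w ∈ {w | ∀ v₁ ∈ A, ∀ v₂ ∈ A, v₁ w = v₂ w} :=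
          fun v₁ h₁ v₂ h₂ => (hall v₁ h₁).trans (hall v₂ h₂).symm
        exact hne ((hxQ w hwQ).trans (hall a₀ ha₀)).symm
      have : g = x := funext hgx
      exact this ▸ hgA
  · -- convex → gated
    rintro ⟨Q, σ, hσQ, hAeq⟩
    intro x hx
    classical
    obtain ⟨a₀, ha₀⟩ := hA
    have memA : ∀ v, v ∈ A ↔ IsUltra P v ∧ ∀ w ∈ Q, v w = σ w := fun v => by
      rw [hAeq]; exact Iff.rfl
    have hxu : IsUltra P x := hx
    set g : ↥P → Set S := fun w => if ∃ v ∈ A, v w = x w then x w else (x w)ᶜ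
      with hgdef
    have hgval : ∀ w, (∃ v ∈ A, v w = x w) → g w = x w := fun w h => if_pos h
    have hgval' : ∀ w, ¬(∃ v ∈ A, v w = x w) → g w = (x w)ᶜ := fun w h => if_neg h
    have hgm : ∀ w : ↥P, g w ∈ w.1 := by
      intro w
      by_cases h : ∃ v ∈ A, v w = x w
      · rw [hgval w h]; exact hxu.1 w
      · rw [hgval' w h]; exact compl_mem_wall (hP _ w.2) (hxu.1 w)
    have hallc : ∀ w, ¬(∃ v ∈ A, v w = x w) → ∀ v ∈ A, v w = (x w)ᶜ := by
      intro w h v hv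
      exact wall_eq_compl (hP _ w.2) ((hA' hv).1 w) (hxu.1 w) (fun he => h ⟨v, hv, he⟩)
    have hgu : IsUltra P g := by
      refine ⟨hgm, ?_⟩
      intro w₁ w₂ B₁ B₂ hB₁ hB₂ hsub hg1
      by_cases h1 : ∃ v ∈ A, v w₁ = x w₁
      · obtain ⟨v, hvA, hvx⟩ := h1
        have hx1 : x w₁ = B₁ := by rw [← hgval w₁ ⟨v, hvA, hvx⟩]; exact hg1
        have hx2 : x w₂ = B₂ := hxu.2 w₁ w₂ B₁ B₂ hB₁ hB₂ hsub hx1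
        have hv2 : v w₂ = B₂ :=
          (hA' hvA).2 w₁ w₂ B₁ B₂ hB₁ hB₂ hsub (hvx.trans hx1)
        rw [hgval w₂ ⟨v, hvA, hv2.trans hx2.symm⟩]; exact hx2
      · have hxc1 : (x w₁)ᶜ = B₁ := by rw [← hgval' w₁ h1]; exact hg1
        have hAv2 : ∀ v ∈ A, v w₂ = B₂ := fun v hv =>
          (hA' hv).2 w₁ w₂ B₁ B₂ hB₁ hB₂ hsub ((hallc w₁ h1 v hv).trans hxc1)
        by_cases h2 : x w₂ = B₂
        · rw [hgval w₂ ⟨a₀, ha₀, (hAv2 a₀ ha₀).trans h2.symm⟩]; exact h2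
        · have h2' : ¬ ∃ v ∈ A, v w₂ = x w₂ := by
            rintro ⟨v, hv, he⟩
            exact h2 (he.symm.trans (hAv2 v hv))
          rw [hgval' w₂ h2',
            wall_eq_compl (hP _ w₂.2) (hxu.1 w₂) hB₂ h2, compl_compl]
    have hgQ : ∀ w ∈ Q, g w = σ w := by
      intro w hw
      by_cases h : ∃ v ∈ A, v w = x w
      · obtain ⟨v, hv, hvx⟩ := h
        rw [hgval w ⟨v, hv, hvx⟩, ← hvx]
        exact ((memA v).1 hv).2 w hw
      · rw [hgval' w h, ← hallc w h a₀ ha₀]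
        exact ((memA a₀).1 ha₀).2 w hw
    have hgA : g ∈ A := (memA g).2 ⟨hgu, hgQ⟩
    have hgmed : ∀ a ∈ A, medianUF P a g x = g := by
      intro a ha
      funext w
      show a w ∩ g w ∪ a w ∩ x w ∪ g w ∩ x w = g w
      apply maj_eq
      by_cases h : ∃ v ∈ A, v w = x w
      · exact Or.inl (hgval w h)
      · exact Or.inr ((hallc w h a ha).trans (hgval' w h).symm)
    refine ⟨g, ⟨hgA, hgmed⟩, ?_⟩
    rintro g' ⟨hg'A, hg'med⟩
    funext w
    by_contra h1
    have hgc : g' w = (g w)ᶜ :=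
      wall_eq_compl (hP _ w.2) ((hA' hg'A).1 w) (hgm w) h1
    by_cases h2 : x w = g w
    · have e := congrFun (hg'med g hgA) w
      simp only [medianUF] at e
      rw [h2, hgc] at e
      have hcc : g w = (g w)ᶜ := (compl_maj₂ (g w)).symm.trans e
      exact h1 (hgc.trans hcc.symm)
    · have hxc : x w = (g w)ᶜ :=
        wall_eq_compl (hP _ w.2) (hxu.1 w) (hgm w) h2
      have e := congrFun (hgmed g' hg'A) w
      simp only [medianUF] at e
      rw [hxc, hgc] at e
      have hcc : (g w)ᶜ = g w := (compl_maj₁ (g w)).symm.trans e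
      exact h1 (hgc.trans hcc)

end WallDuality
end

section
/- Gates land in X_C and are closest points: let C be a dualisable system on a set with walls (S,P), let Ĉ ⊆ X̂ be a nonempty P-convex set such that C₀ := X_C ∩ Ĉ is nonempty, and let x ∈ X_C. Let g(x) denote the gate of x to Ĉ, i.e. the ultrafilter obtained from x by reversing x(h) exactly for the walls h separating x from Ĉ. Then: g(x) ∈ C₀; every wall separating x from g(x) separates x from every point of Ĉ; and dist_C(x,c) ≥ dist_C(x,g(x)) for every c ∈ C₀. -/
open Set

namespace WallDuality

lemma compl_mem_wall_s5 {S : Type*} {P : Set (Set (Set S))} (hP : IsWallSystem P)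
    {w : ↥P} {A : Set S} (hA : A ∈ w.1) : Aᶜ ∈ w.1 := by
  obtain ⟨B, hB⟩ := hP w.1 w.2
  rw [hB] at hA ⊢
  rcases hA with rfl | rfl
  · right; rfl
  · left; rw [compl_compl]

lemma eq_compl_of_ne {S : Type*} {P : Set (Set (Set S))} (hP : IsWallSystem P)
    {w : ↥P} {A B : Set S} (hA : A ∈ w.1) (hB : B ∈ w.1) (hne : B ≠ A) : B = Aᶜ := by
  obtain ⟨D, hD⟩ := hP w.1 w.2
  rw [hD] at hA hB
  rcases hA with rfl | rfl <;> rcases hB with rfl | rfl <;>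
    first | rfl | (exact absurd rfl hne) | (rw [compl_compl])

lemma wallDist_mono_sep {S : Type*} {P : Set (Set (Set S))} {C : Set (Set ↥P)}
    {x y x' y' : ↥P → Set S} (h : ∀ w : ↥P, x w ≠ y w → x' w ≠ y' w) :
    wallDist P C x y ≤ wallDist P C x' y' := by
  refine iSup₂_le fun c hc => ?_
  exact le_iSup₂_of_le c ⟨hc.1, fun w hw => h w (hc.2 w hw)⟩ le_rfl

lemma wallDist_triangle {S : Type*} {P : Set (Set (Set S))} {C : Set (Set ↥P)}
    (hC : IsDualisable P C) (x y z : ↥P → Set S) :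
    wallDist P C x z ≤ wallDist P C x y + wallDist P C y z := by
  refine iSup₂_le fun c hc => ?_
  set c₁ : Set ↥P := {w ∈ c | x w ≠ y w} with hc₁def
  have hsub₁ : c₁ ⊆ c := fun w hw => hw.1
  have hsub₂ : c \ c₁ ⊆ c := diff_subset
  have hcu : c = c₁ ∪ (c \ c₁) := (union_diff_cancel hsub₁).symm
  have h1 : c₁.encard ≤ wallDist P C x y :=
    le_iSup₂_of_le c₁ ⟨hC.subset_mem c hc.1 c₁ hsub₁, fun w hw => hw.2⟩ le_rfl
  have h2 : (c \ c₁).encard ≤ wallDist P C y z := by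
    refine le_iSup₂_of_le (c \ c₁) ⟨hC.subset_mem c hc.1 _ hsub₂, fun w hw => ?_⟩ le_rfl
    have hxy : x w = y w := by
      by_contra hne
      exact hw.2 ⟨hw.1, hne⟩
    rw [← hxy]
    exact hc.2 w hw.1
  calc c.encard = (c₁ ∪ (c \ c₁)).encard := by rw [← hcu]
    _ ≤ c₁.encard + (c \ c₁).encard := encard_union_le _ _
    _ ≤ _ := add_le_add h1 h2

/-- Gates to `P`-convex sets meeting `X_C` stay in `X_C`, the walls separating a
point from its gate separate it from the whole convex set, and the gate is a
closest point (Lemmas 3.10 and 3.11). -/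
theorem gate_mem_dual_and_closest_point
    {S : Type*} (P : Set (Set (Set S))) (C : Set (Set ↥P))
    (hP : IsWallSystem P) (hC : IsDualisable P C)
    (C' : Set (↥P → Set S)) (hconv : IsPConvex P C')
    (hne : (dualSpace P C ∩ C').Nonempty)
    (x : ↥P → Set S) (hx : x ∈ dualSpace P C) :
    gateUF P C' x ∈ dualSpace P C ∩ C' ∧
    (∀ w : ↥P, gateUF P C' x w ≠ x w → ∀ v ∈ C', v w ≠ x w) ∧
    (∀ c ∈ dualSpace P C ∩ C', wallDist P C x (gateUF P C' x) ≤ wallDist P C x c) := by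
  classical
  obtain ⟨c₀, hc₀X, hc₀C'⟩ := hne
  obtain ⟨Q, σ, hσ, hC'eq⟩ := hconv
  have hultra : ∀ v ∈ C', IsUltra P v := by
    intro v hv; rw [hC'eq] at hv; exact hv.1
  set g := gateUF P C' x with hg
  have hgthen : ∀ w : ↥P, (∃ v ∈ C', v w = x w) → g w = x w := by
    intro w h; simp only [hg, gateUF, if_pos h]
  have hgelse : ∀ w : ↥P, ¬(∃ v ∈ C', v w = x w) → g w = (x w)ᶜ := by
    intro w h; simp only [hg, gateUF, if_neg h]
  -- in the "else" case every point of C' agrees with g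
  have hagree : ∀ w : ↥P, ¬(∃ v ∈ C', v w = x w) → ∀ v ∈ C', v w = g w := by
    intro w h v hv
    have hvne : v w ≠ x w := fun he => h ⟨v, hv, he⟩
    have := eq_compl_of_ne hP (hx.1.1 w) ((hultra v hv).1 w) hvne
    rw [this, hgelse w h]
  have hwitness : ∀ w : ↥P, ∃ v ∈ C', v w = g w := by
    intro w
    by_cases h : ∃ v ∈ C', v w = x w
    · obtain ⟨v, hv, hve⟩ := h
      exact ⟨v, hv, by rw [hve, hgthen w ⟨v, hv, hve⟩]⟩
    · exact ⟨c₀, hc₀C', hagree w h c₀ hc₀C'⟩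
  -- claim (2)
  have hsep : ∀ w : ↥P, g w ≠ x w → ∀ v ∈ C', v w ≠ x w := by
    intro w hne v hv he
    exact hne (hgthen w ⟨v, hv, he⟩)
  -- g is an ultrafilter
  have hgultra : IsUltra P g := by
    constructor
    · intro w
      by_cases h : ∃ v ∈ C', v w = x w
      · rw [hgthen w h]; exact hx.1.1 w
      · rw [hgelse w h]; exact compl_mem_wall_s5 hP (hx.1.1 w)
    · intro w₁ w₂ A B hA hB hAB hgA
      by_cases h₂ : ∃ v ∈ C', v w₂ = x w₂
      · obtain ⟨v₂, hv₂, hv₂e⟩ := h₂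
        rw [hgthen w₂ ⟨v₂, hv₂, hv₂e⟩]
        by_cases h₁ : ∃ v ∈ C', v w₁ = x w₁
        · exact hx.1.2 w₁ w₂ A B hA hB hAB (by rw [← hgthen w₁ h₁, hgA])
        · have hv₂1 : v₂ w₁ = A := by rw [hagree w₁ h₁ v₂ hv₂, hgA]
          rw [← hv₂e]
          exact (hultra v₂ hv₂).2 w₁ w₂ A B hA hB hAB hv₂1
      · by_cases h₁ : ∃ v ∈ C', v w₁ = x w₁
        · obtain ⟨v₁, hv₁, hv₁e⟩ := h₁
          rw [← hagree w₂ h₂ v₁ hv₁]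
          exact (hultra v₁ hv₁).2 w₁ w₂ A B hA hB hAB
            (by rw [hv₁e, ← hgthen w₁ ⟨v₁, hv₁, hv₁e⟩, hgA])
        · rw [← hagree w₂ h₂ c₀ hc₀C']
          exact (hultra c₀ hc₀C').2 w₁ w₂ A B hA hB hAB
            (by rw [hagree w₁ h₁ c₀ hc₀C', hgA])
  -- g ∈ C'
  have hgC' : g ∈ C' := by
    rw [hC'eq]
    refine ⟨hgultra, fun w hw => ?_⟩
    obtain ⟨v, hv, hve⟩ := hwitness w
    rw [hC'eq] at hv
    rw [← hve, hv.2 w hw]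
  -- distance from x to g is at most distance from x to any point of C'
  have hdistle : ∀ v ∈ C', wallDist P C x g ≤ wallDist P C x v := by
    intro v hv
    refine wallDist_mono_sep fun w hne => ?_
    exact fun he => hsep w (Ne.symm hne) v hv he.symm
  -- g ∈ dualSpace
  have hgX : g ∈ dualSpace P C := by
    refine ⟨hgultra, fun s => ?_⟩
    have h1 : wallDist P C g (principalUF P s) ≤
        wallDist P C g x + wallDist P C x (principalUF P s) := wallDist_triangle hC _ _ _
    have h2 : wallDist P C g x ≤ wallDist P C x c₀ := by
      refine le_trans (wallDist_mono_sep (x' := x) (y' := g) fun w hne => hne.symm) ?_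
      exact hdistle c₀ hc₀C'
    have h3 : wallDist P C x c₀ ≤
        wallDist P C x (principalUF P s) + wallDist P C (principalUF P s) c₀ :=
      wallDist_triangle hC _ _ _
    have h4 : wallDist P C (principalUF P s) c₀ ≤ wallDist P C c₀ (principalUF P s) :=
      wallDist_mono_sep fun w hne => hne.symm
    have hfin1 : wallDist P C x (principalUF P s) < ⊤ :=
      lt_top_iff_ne_top.2 (hx.2 s)
    have hfin2 : wallDist P C c₀ (principalUF P s) < ⊤ :=
      lt_top_iff_ne_top.2 (hc₀X.2 s)
    have : wallDist P C g (principalUF P s) < ⊤ := by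
      refine lt_of_le_of_lt h1 ?_
      refine WithTop.add_lt_top.2 ⟨?_, hfin1⟩
      refine lt_of_le_of_lt (h2.trans h3) ?_
      exact WithTop.add_lt_top.2 ⟨hfin1, lt_of_le_of_lt h4 hfin2⟩
    exact this.ne
  exact ⟨⟨hgX, hgC'⟩, hsep, fun c hc => hdistle c hc.2⟩

end WallDuality
end
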